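/- arXiv:1204.4141 — 4 statements merged into one kernel-verified Lean document; each statement's English description precedes it below -/
import Mathlib

section
/- Let A and C⁰ be d×d positive definite symmetric real matrices, c > 0, and let (C^t) satisfy the recursion C^{t+1} = C^t - η_C^t · c · C^t A C^t. Then for every t ≥ 0, any orthogonal matrix Q that diagonalizes c·√A·C⁰·√A also diagonalizes c·√A·C^t·√A (assuming each C^t remains well-defined, i.e., symmetric). -/
open Matrix
open scoped MatrixOrder

lemma isDiag_mul {d : ℕ} {M N : Matrix (Fin d) (Fin d) ℝ}
    (hM : M.IsDiag) (hN : N.IsDiag) : (M * N).IsDiag := by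
  intro i j hij
  rw [Matrix.mul_apply]
  apply Finset.sum_eq_zero
  intro k _
  by_cases hk : i = k
  · subst hk
    rw [hN hij, mul_zero]
  · rw [hM hk, zero_mul]

lemma eigenbasis_invariant_aux {d : ℕ}
    (A S : Matrix (Fin d) (Fin d) ℝ) (hSS : S * S = A)
    (C : ℕ → Matrix (Fin d) (Fin d) ℝ)
    (c : ℝ) (hc : 0 < c) (eta : ℕ → ℝ)
    (hrec : ∀ t, C (t + 1) = C t - (eta t * c) • (C t * A * C t))
    (Q : Matrix (Fin d) (Fin d) ℝ) (hQ' : Q * Qᵀ = 1)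
    (hdiag0 : (Qᵀ * (c • (S * C 0 * S)) * Q).IsDiag) :
    ∀ t, (Qᵀ * (c • (S * C t * S)) * Q).IsDiag := by
  set D : ℕ → Matrix (Fin d) (Fin d) ℝ := fun t => Qᵀ * (c • (S * C t * S)) * Q with hD
  have key : ∀ t, D (t + 1) = D t - eta t • (D t * D t) := by
    intro t
    have h1 : S * C (t+1) * S
        = S * C t * S - (eta t * c) • ((S * C t * S) * (S * C t * S)) := by
      rw [hrec t]
      rw [Matrix.mul_sub, Matrix.sub_mul]
      congr 1
      rw [Matrix.mul_smul, Matrix.smul_mul]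
      congr 1
      calc S * (C t * A * C t) * S = S * C t * (S * S) * C t * S := by
            rw [hSS]; noncomm_ring
        _ = (S * C t * S) * (S * C t * S) := by noncomm_ring
    have h2 : D t * D t = (c * c) • (Qᵀ * ((S * C t * S) * (S * C t * S)) * Q) := by
      simp only [hD]
      calc (Qᵀ * (c • (S * C t * S)) * Q) * (Qᵀ * (c • (S * C t * S)) * Q)
          = (c * c) • ((Qᵀ * (S * C t * S)) * (Q * Qᵀ) * ((S * C t * S) * Q)) := by
            simp only [Matrix.mul_smul, Matrix.smul_mul, smul_smul]
            noncomm_ring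
        _ = (c * c) • (Qᵀ * ((S * C t * S) * (S * C t * S)) * Q) := by
            rw [hQ']; noncomm_ring
    simp only [hD, h1]
    rw [h2]
    rw [smul_sub, Matrix.mul_sub, Matrix.sub_mul]
    congr 1
    rw [smul_smul, Matrix.mul_smul, Matrix.smul_mul]
    have hcc : c * (eta t * c) = eta t * (c * c) := by ring
    rw [hcc, mul_smul]
  intro t
  induction t with
  | zero => exact hdiag0
  | succ n ih =>
    show (D (n+1)).IsDiag
    rw [key n]
    exact Matrix.IsDiag.sub ih ((isDiag_mul ih ih).smul _)

/-- The eigenbasis of √A C^t √A is invariant along the deterministic NGD covariance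
    update C^{t+1} = C^t − η_C^t c C^t A C^t. -/
theorem eigenbasis_invariant {d : ℕ}
    (A : Matrix (Fin d) (Fin d) ℝ) (hA : A.PosDef)
    (C : ℕ → Matrix (Fin d) (Fin d) ℝ) (hC0 : (C 0).PosDef)
    (c : ℝ) (hc : 0 < c) (eta : ℕ → ℝ) (heta : ∀ t, 0 < eta t)
    (hrec : ∀ t, C (t + 1) = C t - (eta t * c) • (C t * A * C t))
    (hsym : ∀ t, (C t).IsSymm)
    (Q : Matrix (Fin d) (Fin d) ℝ) (hQ : Qᵀ * Q = 1) (hQ' : Q * Qᵀ = 1)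
    (hdiag0 : (Qᵀ * (c • (CFC.sqrt A * C 0 * CFC.sqrt A)) * Q).IsDiag) :
    ∀ t, (Qᵀ * (c • (CFC.sqrt A * C t * CFC.sqrt A)) * Q).IsDiag :=
  eigenbasis_invariant_aux A (CFC.sqrt A) (CFC.sqrt_mul_sqrt_self A hA.posSemidef.nonneg)
    C c hc eta hrec Q hQ' hdiag0
end

section
/- Let A be a d×d positive definite symmetric matrix and let m^{t+1} = m^t - η_m^t c C^t A m^t, C^{t+1} = C^t - η_C^t c C^t A C^t with c > 0. Assume γ_m ≤ η_m^t λ₁(cAC^t) ≤ 1 and γ_C ≤ η_C^t λ₁(cAC^t) ≤ 1/2 for positive constants γ_m, γ_C. Then limsup_t ‖m^{t+1}‖/‖m^t‖ ≤ 1 - γ_m and limsup_t ‖C^{t+1}‖_F/‖C^t‖_F ≤ 1 - γ_C; in particular ‖m^t‖ → 0 and ‖C^t‖_F → 0. -/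
open Matrix Filter

/-- Euclidean norm on ℝ^d. -/
noncomputable def eucNorm {d : ℕ} (v : Fin d → ℝ) : ℝ :=
  Real.sqrt (∑ i, v i ^ 2)

/-- Frobenius norm. -/
noncomputable def frobNorm {d : ℕ} (M : Matrix (Fin d) (Fin d) ℝ) : ℝ :=
  Real.sqrt (Mᵀ * M).trace

open scoped ComplexOrder in
/-- The positive semidefinite square root of a positive semidefinite matrix
    (the definition of `Matrix.PosSemidef.sqrt` from the older Mathlib, since removed). -/
noncomputable def Matrix.PosSemidef.sqrt {n : Type*} [Fintype n] [DecidableEq n]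
    {𝕜 : Type*} [RCLike 𝕜] {A : Matrix n n 𝕜} (hA : A.PosSemidef) : Matrix n n 𝕜 :=
  hA.1.eigenvectorUnitary.1 * diagonal ((↑) ∘ (√·) ∘ hA.1.eigenvalues) *
    (star hA.1.eigenvectorUnitary : Matrix n n 𝕜)

section NormLemmas

attribute [local instance] Matrix.frobeniusSeminormedAddCommGroup
  Matrix.frobeniusNormedAddCommGroup Matrix.frobeniusNormedRing

variable {d : ℕ}

lemma frobNorm_eq_sum (M : Matrix (Fin d) (Fin d) ℝ) :
    frobNorm M = Real.sqrt (∑ i, ∑ j, M i j ^ 2) := by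
  unfold frobNorm
  congr 1
  rw [Matrix.trace]
  simp [Matrix.diag, Matrix.mul_apply, sq]
  exact Finset.sum_comm

lemma frobNorm_eq_norm (M : Matrix (Fin d) (Fin d) ℝ) : frobNorm M = ‖M‖ := by
  rw [frobNorm_eq_sum, Matrix.frobenius_norm_def, Real.sqrt_eq_rpow]
  congr 1
  simp [Real.norm_eq_abs, Real.rpow_two, sq_abs]

lemma eucNorm_eq_norm (v : Fin d → ℝ) :
    eucNorm v = ‖(WithLp.equiv 2 (Fin d → ℝ)).symm v‖ := by
  rw [eucNorm, EuclideanSpace.norm_eq]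
  congr 1
  simp [Real.norm_eq_abs, sq_abs]

lemma eucNorm_nonneg (v : Fin d → ℝ) : 0 ≤ eucNorm v := Real.sqrt_nonneg _

lemma frobNorm_nonneg (M : Matrix (Fin d) (Fin d) ℝ) : 0 ≤ frobNorm M :=
  Real.sqrt_nonneg _

lemma eucNorm_smul (a : ℝ) (v : Fin d → ℝ) : eucNorm (a • v) = |a| * eucNorm v := by
  rw [eucNorm_eq_norm, eucNorm_eq_norm, show (WithLp.equiv 2 (Fin d → ℝ)).symm (a • v)
      = a • (WithLp.equiv 2 (Fin d → ℝ)).symm v from rfl, norm_smul, Real.norm_eq_abs]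

lemma eucNorm_sub_le (u v : Fin d → ℝ) : eucNorm (u - v) ≤ eucNorm u + eucNorm v := by
  rw [eucNorm_eq_norm, eucNorm_eq_norm, eucNorm_eq_norm,
    show (WithLp.equiv 2 (Fin d → ℝ)).symm (u - v)
      = (WithLp.equiv 2 (Fin d → ℝ)).symm u - (WithLp.equiv 2 (Fin d → ℝ)).symm v from rfl]
  exact norm_sub_le _ _

lemma frobNorm_smul (a : ℝ) (M : Matrix (Fin d) (Fin d) ℝ) :
    frobNorm (a • M) = |a| * frobNorm M := by
  rw [frobNorm_eq_sum, frobNorm_eq_sum, ← Real.sqrt_sq_eq_abs, ← Real.sqrt_mul (sq_nonneg a)]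
  congr 1
  rw [Finset.mul_sum]
  refine Finset.sum_congr rfl fun i _ => ?_
  rw [Finset.mul_sum]
  refine Finset.sum_congr rfl fun j _ => ?_
  simp [mul_pow]

lemma frobNorm_sub_le (M N : Matrix (Fin d) (Fin d) ℝ) :
    frobNorm (M - N) ≤ frobNorm M + frobNorm N := by
  simp only [frobNorm_eq_norm]; exact norm_sub_le _ _

lemma frobNorm_mul_le (M N : Matrix (Fin d) (Fin d) ℝ) :
    frobNorm (M * N) ≤ frobNorm M * frobNorm N := by
  simp only [frobNorm_eq_norm]; exact Matrix.frobenius_norm_mul M N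

lemma eucNorm_mulVec_le (M : Matrix (Fin d) (Fin d) ℝ) (v : Fin d → ℝ) :
    eucNorm (M.mulVec v) ≤ frobNorm M * eucNorm v := by
  have h1 : ∑ i, (M.mulVec v) i ^ 2 ≤ (∑ i, ∑ j, M i j ^ 2) * ∑ j, v j ^ 2 := by
    rw [Finset.sum_mul]
    apply Finset.sum_le_sum
    intro i _
    exact Finset.sum_mul_sq_le_sq_mul_sq Finset.univ (fun j => M i j) v
  calc eucNorm (M.mulVec v) ≤ Real.sqrt ((∑ i, ∑ j, M i j ^ 2) * ∑ j, v j ^ 2) :=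
        Real.sqrt_le_sqrt h1
    _ = frobNorm M * eucNorm v := by
        rw [Real.sqrt_mul (by positivity), frobNorm_eq_sum]; rfl

end NormLemmas

section UconjLemmas

variable {d : ℕ}

/-- conjugation by a unitary -/
noncomputable def uconj (U : Matrix.unitaryGroup (Fin d) ℝ) (X : Matrix (Fin d) (Fin d) ℝ) :
    Matrix (Fin d) (Fin d) ℝ :=
  (U : Matrix (Fin d) (Fin d) ℝ) * X * star (U : Matrix (Fin d) (Fin d) ℝ)

lemma uconj_mul (U : Matrix.unitaryGroup (Fin d) ℝ) (X Y : Matrix (Fin d) (Fin d) ℝ) :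
    uconj U X * uconj U Y = uconj U (X * Y) := by
  unfold uconj
  have h : star (U : Matrix (Fin d) (Fin d) ℝ) * (U : Matrix (Fin d) (Fin d) ℝ) = 1 :=
    Unitary.coe_star_mul_self U
  calc (U : Matrix (Fin d) (Fin d) ℝ) * X * star (U : Matrix (Fin d) (Fin d) ℝ) *
      ((U : Matrix (Fin d) (Fin d) ℝ) * Y * star (U : Matrix (Fin d) (Fin d) ℝ))
      = (U : Matrix (Fin d) (Fin d) ℝ) * X *
        (star (U : Matrix (Fin d) (Fin d) ℝ) * (U : Matrix (Fin d) (Fin d) ℝ)) *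
        (Y * star (U : Matrix (Fin d) (Fin d) ℝ)) := by noncomm_ring
    _ = (U : Matrix (Fin d) (Fin d) ℝ) * (X * Y) * star (U : Matrix (Fin d) (Fin d) ℝ) := by
        rw [h]; noncomm_ring

lemma uconj_smul (U : Matrix.unitaryGroup (Fin d) ℝ) (a : ℝ) (X : Matrix (Fin d) (Fin d) ℝ) :
    a • uconj U X = uconj U (a • X) := by
  unfold uconj
  rw [mul_smul_comm, smul_mul_assoc]

lemma uconj_sub (U : Matrix.unitaryGroup (Fin d) ℝ) (X Y : Matrix (Fin d) (Fin d) ℝ) :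
    uconj U X - uconj U Y = uconj U (X - Y) := by
  unfold uconj
  rw [← sub_mul, ← mul_sub]

lemma uconj_one (U : Matrix.unitaryGroup (Fin d) ℝ) : uconj U 1 = 1 := by
  unfold uconj
  rw [Matrix.mul_one]
  exact Unitary.coe_mul_star_self U

lemma trace_uconj (U : Matrix.unitaryGroup (Fin d) ℝ) (X : Matrix (Fin d) (Fin d) ℝ) :
    (uconj U X).trace = X.trace := by
  unfold uconj
  rw [Matrix.trace_mul_cycle, Unitary.coe_star_mul_self U, Matrix.one_mul]

lemma spectrum_uconj (U : Matrix.unitaryGroup (Fin d) ℝ) (X : Matrix (Fin d) (Fin d) ℝ) :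
    spectrum ℝ (uconj U X) = spectrum ℝ X :=
  Unitary.spectrum_star_right_conjugate

lemma transpose_uconj_diag (U : Matrix.unitaryGroup (Fin d) ℝ) (v : Fin d → ℝ) :
    (uconj U (Matrix.diagonal v))ᵀ = uconj U (Matrix.diagonal v) := by
  have h : (uconj U (Matrix.diagonal v)).IsHermitian := by
    unfold uconj
    rw [Matrix.star_eq_conjTranspose]
    exact Matrix.isHermitian_mul_mul_conjTranspose _ (Matrix.isHermitian_diagonal v)
  rw [← Matrix.conjTranspose_eq_transpose_of_trivial]
  exact h

/-- spectral theorem reformulated -/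
lemma spectral_uconj {A : Matrix (Fin d) (Fin d) ℝ} (hA : A.IsHermitian) :
    A = uconj hA.eigenvectorUnitary (Matrix.diagonal hA.eigenvalues) := by
  have := hA.spectral_theorem
  simpa [uconj] using this

end UconjLemmas

lemma sqrt_herm' {d : ℕ} {A : Matrix (Fin d) (Fin d) ℝ} (hA : A.PosSemidef) :
    hA.sqrt.IsHermitian := by
  unfold Matrix.PosSemidef.sqrt
  rw [Matrix.star_eq_conjTranspose]
  exact Matrix.isHermitian_mul_mul_conjTranspose _ (Matrix.isHermitian_diagonal _)

lemma sqrt_mul_self' {d : ℕ} {A : Matrix (Fin d) (Fin d) ℝ} (hA : A.PosSemidef) :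
    hA.sqrt * hA.sqrt = A := by
  have hs : hA.sqrt = uconj hA.1.eigenvectorUnitary
      (Matrix.diagonal (fun i => Real.sqrt (hA.1.eigenvalues i))) := rfl
  rw [hs, uconj_mul, Matrix.diagonal_mul_diagonal]
  conv_rhs => rw [spectral_uconj hA.1]
  congr 2
  funext i
  exact Real.mul_self_sqrt (hA.eigenvalues_nonneg i)

section Analysis

open Filter

lemma ratio_step {mu L k g : ℝ} (hmu : 0 < mu) (hmuL : mu ≤ L) (hg : 0 < g)
    (hkL1 : g ≤ k * L) (hkL2 : k * L ≤ 1 / 2) :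
    (mu / L) * (1 + g * (1 - mu / L)) ≤ (mu - k * mu ^ 2) / (L - k * L ^ 2) := by
  have hL : 0 < L := lt_of_lt_of_le hmu hmuL
  have hk : 0 < k := by nlinarith
  have hden : 0 < L - k * L ^ 2 := by nlinarith
  have e : (mu / L) * (1 + g * (1 - mu / L)) = (mu * (L + g * (L - mu))) / (L ^ 2) := by
    rw [eq_div_iff (by positivity : (L:ℝ) ^ 2 ≠ 0)]
    field_simp
  rw [e, div_le_div_iff₀ (by positivity) hden]
  nlinarith [mul_nonneg (mul_nonneg (mul_nonneg hL.le (sub_nonneg.2 hmuL)) hmu.le)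
    (show 0 ≤ k * L - g * (1 - k * L) by nlinarith)]

lemma key_convergence (u r : ℕ → ℝ) (hu : ∀ t, 0 ≤ u t) (g K : ℝ)
    (hg : 0 < g) (hg1 : g ≤ 1) (hK : 0 ≤ K)
    (hr1 : ∀ t, r t ≤ 1) (hr : Tendsto r atTop (nhds 1))
    (hstep : ∀ t, u (t + 1) ≤ ((1 - g) + K * (1 - r t)) * u t) :
    limsup (fun t => u (t + 1) / u t) atTop ≤ 1 - g ∧ Tendsto u atTop (nhds 0) := by
  set a : ℕ → ℝ := fun t => (1 - g) + K * (1 - r t) with ha_def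
  have ha_nonneg : ∀ t, 0 ≤ a t := fun t => by
    have := hr1 t
    have : 0 ≤ K * (1 - r t) := mul_nonneg hK (by linarith)
    simp only [ha_def]; linarith
  have ha_tendsto : Tendsto a atTop (nhds (1 - g)) := by
    have h1 : Tendsto (fun t => K * (1 - r t)) atTop (nhds (K * (1 - 1))) :=
      (tendsto_const_nhds.sub hr).const_mul K
    simpa using tendsto_const_nhds.add h1
  have hratio : ∀ t, u (t + 1) / u t ≤ a t := by
    intro t
    rcases eq_or_lt_of_le (hu t) with h | h
    · have h2 : u (t + 1) = 0 := le_antisymm (by simpa [← h] using hstep t) (hu (t + 1))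
      simp [h2, ← h, ha_nonneg t]
    · rw [div_le_iff₀ h]
      exact hstep t
  constructor
  · have h1 : limsup a atTop = 1 - g := ha_tendsto.limsup_eq
    rw [← h1]
    refine limsup_le_limsup (Eventually.of_forall hratio) ?_ ?_
    · refine IsBoundedUnder.isCoboundedUnder_le (⟨0, ?_⟩ : IsBoundedUnder (· ≥ ·) atTop _)
      exact eventually_map.2 (Eventually.of_forall fun t => div_nonneg (hu _) (hu _))
    · exact ha_tendsto.isBoundedUnder_le
  · have hq : (1 : ℝ) - g < 1 - g / 2 := by linarith
    have hev : ∀ᶠ t in atTop, a t ≤ 1 - g / 2 :=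
      ha_tendsto.eventually_le_const hq
    obtain ⟨T, hT⟩ := eventually_atTop.1 hev
    set q : ℝ := 1 - g / 2 with hq_def
    have hq0 : 0 ≤ q := by simp only [hq_def]; linarith
    have hq1 : q < 1 := by simp only [hq_def]; linarith
    have hgeo : ∀ n, u (n + T) ≤ q ^ n * u T := by
      intro n
      induction n with
      | zero => simp
      | succ n ih =>
        have h1 : u (n + T + 1) ≤ q * u (n + T) := by
          calc u (n + T + 1) ≤ a (n + T) * u (n + T) := hstep _
            _ ≤ q * u (n + T) := mul_le_mul_of_nonneg_right (hT _ (Nat.le_add_left _ _)) (hu _)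
        calc u (n + 1 + T) = u (n + T + 1) := by ring_nf
          _ ≤ q * u (n + T) := h1
          _ ≤ q * (q ^ n * u T) := mul_le_mul_of_nonneg_left ih hq0
          _ = q ^ (n + 1) * u T := by ring
    have hpow : Tendsto (fun n : ℕ => q ^ n * u T) atTop (nhds 0) := by
      simpa using (tendsto_pow_atTop_nhds_zero_of_lt_one hq0 hq1).mul_const (u T)
    have h0 : Tendsto (fun n => u (n + T)) atTop (nhds 0) :=
      squeeze_zero (fun n => hu _) hgeo hpow
    exact (tendsto_add_atTop_iff_nat T).1 h0

end Analysis

lemma diag_quad {d : ℕ} (k : ℝ) (v : Fin d → ℝ) :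
    Matrix.diagonal v - k • (Matrix.diagonal v * Matrix.diagonal v)
      = Matrix.diagonal (fun i => v i - k * v i ^ 2) := by
  rw [Matrix.diagonal_mul_diagonal]
  ext i j
  rcases eq_or_ne i j with h | h
  · subst h
    simp [Matrix.diagonal_apply_eq, sq]
  · simp [Matrix.diagonal_apply_ne _ h]

lemma diag_shift {d : ℕ} (a : ℝ) (v : Fin d → ℝ) :
    a • Matrix.diagonal v - 1 = Matrix.diagonal (fun i => a * v i - 1) := by
  ext i j
  rcases eq_or_ne i j with h | h
  · subst h
    simp [Matrix.diagonal_apply_eq, Matrix.one_apply_eq]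
  · simp [Matrix.diagonal_apply_ne _ h, Matrix.one_apply_ne h]

set_option maxHeartbeats 1000000 in
/-- Theorem 2: linear convergence of the mean vector and the covariance matrix of
    the deterministic NGD on monotonic convex-quadratic-composite functions. -/
theorem ngd_linear_convergence {d : ℕ} (hd : 0 < d)
    (A : Matrix (Fin d) (Fin d) ℝ) (hA : A.PosDef)
    (m : ℕ → Fin d → ℝ) (C : ℕ → Matrix (Fin d) (Fin d) ℝ) (hC0 : (C 0).PosDef)
    (c : ℝ) (hc : 0 < c) (etam etaC : ℕ → ℝ) (gammam gammaC : ℝ)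
    (hgm : 0 < gammam) (hgC : 0 < gammaC)
    (hrecm : ∀ t, m (t + 1) = m t - (etam t * c) • ((C t * A).mulVec (m t)))
    (hrecC : ∀ t, C (t + 1) = C t - (etaC t * c) • (C t * A * C t))
    (hH : ∀ t, (hA.posSemidef.sqrt * C t * hA.posSemidef.sqrt).IsHermitian)
    (hratem : ∀ t, gammam ≤ etam t * (c * ⨆ i, (hH t).eigenvalues i) ∧
        etam t * (c * ⨆ i, (hH t).eigenvalues i) ≤ 1)
    (hrateC : ∀ t, gammaC ≤ etaC t * (c * ⨆ i, (hH t).eigenvalues i) ∧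
        etaC t * (c * ⨆ i, (hH t).eigenvalues i) ≤ 1 / 2) :
    limsup (fun t => eucNorm (m (t + 1)) / eucNorm (m t)) atTop ≤ 1 - gammam ∧
    limsup (fun t => frobNorm (C (t + 1)) / frobNorm (C t)) atTop ≤ 1 - gammaC ∧
    Tendsto (fun t => eucNorm (m t)) atTop (nhds 0) ∧
    Tendsto (fun t => frobNorm (C t)) atTop (nhds 0) := by
  haveI : Nonempty (Fin d) := Fin.pos_iff_nonempty.1 hd
  -- basic facts about B = √A
  set B : Matrix (Fin d) (Fin d) ℝ := hA.posSemidef.sqrt with hBdef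
  have hBherm : B.IsHermitian := sqrt_herm' hA.posSemidef
  have hBB : B * B = A := sqrt_mul_self' hA.posSemidef
  have hBdet : IsUnit B.det := by
    have h1 : B.det * B.det = A.det := by rw [← Matrix.det_mul, hBB]
    have h2 : (0:ℝ) < A.det := hA.det_pos
    refine isUnit_iff_ne_zero.2 fun h0 => ?_
    rw [h0, mul_zero] at h1
    exact absurd h1.symm (ne_of_gt h2)
  have hBunit : IsUnit B := (Matrix.isUnit_iff_isUnit_det B).2 hBdet
  have hBiB : B⁻¹ * B = 1 := Matrix.nonsing_inv_mul B hBdet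
  have hBBi : B * B⁻¹ = 1 := Matrix.mul_nonsing_inv B hBdet
  -- eigenvalue data
  set ev : ∀ t : ℕ, Fin d → ℝ := fun t => (hH t).eigenvalues with hev_def
  set lam : ℕ → ℝ := fun t => ⨆ i, ev t i with hlam_def
  set lmin : ℕ → ℝ := fun t => ⨅ i, ev t i with hlmin_def
  have hratem' : ∀ t, gammam ≤ etam t * (c * lam t) ∧ etam t * (c * lam t) ≤ 1 := hratem
  have hrateC' : ∀ t, gammaC ≤ etaC t * (c * lam t) ∧ etaC t * (c * lam t) ≤ 1 / 2 := hrateC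
  have hlam_ub : ∀ t i, ev t i ≤ lam t := fun t i =>
    le_ciSup (Set.Finite.bddAbove (Set.finite_range _)) i
  have hlmin_lb : ∀ t i, lmin t ≤ ev t i := fun t i =>
    ciInf_le (Set.Finite.bddBelow (Set.finite_range _)) i
  have hsup_le : ∀ (t : ℕ) (x : ℝ), (∀ i, ev t i ≤ x) → lam t ≤ x := fun t x h => ciSup_le h
  have hinf_ge : ∀ (t : ℕ) (x : ℝ), (∀ i, x ≤ ev t i) → x ≤ lmin t := fun t x h => le_ciInf h
  have hlmin_att : ∀ t, ∃ j, lmin t = ev t j := fun t =>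
    (exists_eq_ciInf_of_finite (f := ev t)).imp fun j hj => hj.symm
  -- spectral decomposition
  have hspec : ∀ t, B * C t * B = uconj (hH t).eigenvectorUnitary (Matrix.diagonal (ev t)) :=
    fun t => spectral_uconj (hH t)
  -- the recurrence for H
  have hHrec : ∀ t, B * C (t + 1) * B
      = B * C t * B - (etaC t * c) • ((B * C t * B) * (B * C t * B)) := by
    intro t
    rw [hrecC t, ← hBB]
    noncomm_ring
  have hdiagrec : ∀ t, B * C (t + 1) * B
      = uconj (hH t).eigenvectorUnitary
        (Matrix.diagonal (fun i => ev t i - (etaC t * c) * ev t i ^ 2)) := by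
    intro t
    rw [hHrec t]
    conv_lhs => rw [hspec t]
    rw [uconj_mul, uconj_smul, uconj_sub]
    exact congrArg _ (diag_quad _ _)
  -- spectra
  have hrange : ∀ t, Set.range (ev (t + 1))
      = (fun x => x - (etaC t * c) * x ^ 2) '' Set.range (ev t) := by
    intro t
    have h1 : spectrum ℝ (B * C (t + 1) * B) = Set.range (ev (t + 1)) := by
      rw [hspec (t + 1), spectrum_uconj, spectrum_diagonal]
    have h2 : spectrum ℝ (B * C (t + 1) * B)
        = Set.range (fun i => ev t i - (etaC t * c) * ev t i ^ 2) := by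
      rw [hdiagrec t, spectrum_uconj, spectrum_diagonal]
    rw [← h1, h2]
    exact Set.range_comp (fun x => x - (etaC t * c) * x ^ 2) (ev t)
  -- positivity of eigenvalues at time 0
  have hev0 : ∀ i, 0 < ev 0 i := by
    have hH0pd : (B * C 0 * B).PosDef := by
      have hBinj : Function.Injective (B.mulVec) :=
        Matrix.mulVec_injective_iff_isUnit.mpr hBunit
      refine Matrix.PosDef.of_dotProduct_mulVec_pos (hH 0) fun x hx => ?_
      have hBx : B *ᵥ x ≠ 0 := by
        intro h0
        exact hx (hBinj (by simpa using h0))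
      have h2 := hC0.dotProduct_mulVec_pos hBx
      have hrw : B * C 0 * B = Bᴴ * C 0 * B := by rw [hBherm.eq]
      rw [hrw]
      simpa only [star_mulVec, Matrix.dotProduct_mulVec, Matrix.vecMul_vecMul] using h2
    exact fun i => hH0pd.eigenvalues_pos i
  clear_value ev lam lmin B
  -- positivity of eigenvalues
  have hpos : ∀ t i, 0 < ev t i := by
    intro t
    induction t with
    | zero => exact hev0
    | succ t ih =>
      intro i
      have hmem : ev (t + 1) i ∈ Set.range (ev (t + 1)) := ⟨i, rfl⟩
      rw [hrange t] at hmem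
      obtain ⟨x, ⟨j, rfl⟩, hx⟩ := hmem
      have hlam_pos : 0 < lam t := lt_of_lt_of_le (ih j) (hlam_ub t j)
      have hclam : 0 < c * lam t := mul_pos hc hlam_pos
      have hetaC_pos : 0 < etaC t := by
        rcases le_or_gt (etaC t) 0 with h | h
        · have := mul_nonpos_of_nonpos_of_nonneg h hclam.le
          linarith [(hrateC' t).1]
        · exact h
      have hkev : etaC t * c * ev t j ≤ 1 / 2 := by
        have h1 : etaC t * c * ev t j ≤ etaC t * c * lam t := by
          apply mul_le_mul_of_nonneg_left (hlam_ub t j)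
          positivity
        have h2 : etaC t * c * lam t = etaC t * (c * lam t) := by ring
        linarith [(hrateC' t).2]
      rw [← hx]
      show 0 < ev t j - etaC t * c * ev t j ^ 2
      nlinarith [ih j, mul_le_mul_of_nonneg_right hkev (ih j).le]
  have hlam_pos : ∀ t, 0 < lam t :=
    fun t => lt_of_lt_of_le (hpos t (Classical.arbitrary _)) (hlam_ub t _)
  have hlmin_pos : ∀ t, 0 < lmin t := by
    intro t
    obtain ⟨j, hj⟩ := hlmin_att t
    rw [hj]
    exact hpos t j
  have hlmin_le_lam : ∀ t, lmin t ≤ lam t :=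
    fun t => le_trans (hlmin_lb t (Classical.arbitrary _)) (hlam_ub t _)
  have hetaC_pos : ∀ t, 0 < etaC t := by
    intro t
    have hclam : 0 < c * lam t := mul_pos hc (hlam_pos t)
    rcases le_or_gt (etaC t) 0 with h | h
    · have := mul_nonpos_of_nonpos_of_nonneg h hclam.le
      linarith [(hrateC' t).1]
    · exact h
  -- monotonicity of the quadratic map
  have hmono : ∀ t (x y : ℝ), x ≤ y → y ≤ lam t →
      x - (etaC t * c) * x ^ 2 ≤ y - (etaC t * c) * y ^ 2 := by
    intro t x y hxy hy
    have hk : 0 < etaC t * c := mul_pos (hetaC_pos t) hc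
    have hklam : etaC t * c * lam t ≤ 1 / 2 := by
      have : etaC t * c * lam t = etaC t * (c * lam t) := by ring
      linarith [(hrateC' t).2]
    have hx' : etaC t * c * x ≤ 1 / 2 :=
      le_trans (mul_le_mul_of_nonneg_left (le_trans hxy hy) hk.le) hklam
    have hy' : etaC t * c * y ≤ 1 / 2 :=
      le_trans (mul_le_mul_of_nonneg_left hy hk.le) hklam
    nlinarith [mul_nonneg (sub_nonneg.2 hxy) (show (0:ℝ) ≤ 1 - etaC t * c * (x + y) by linarith)]
  have hlam_rec : ∀ t, lam (t + 1) ≤ lam t - (etaC t * c) * lam t ^ 2 := by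
    intro t
    refine hsup_le _ _ fun i => ?_
    have hmem : ev (t + 1) i ∈ Set.range (ev (t + 1)) := ⟨i, rfl⟩
    rw [hrange t] at hmem
    obtain ⟨x, ⟨j, rfl⟩, hx⟩ := hmem
    rw [← hx]
    exact hmono t _ _ (hlam_ub t j) le_rfl
  have hlmin_rec : ∀ t, lmin t - (etaC t * c) * lmin t ^ 2 ≤ lmin (t + 1) := by
    intro t
    refine hinf_ge _ _ fun i => ?_
    have hmem : ev (t + 1) i ∈ Set.range (ev (t + 1)) := ⟨i, rfl⟩
    rw [hrange t] at hmem
    obtain ⟨x, ⟨j, rfl⟩, hx⟩ := hmem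
    rw [← hx]
    exact hmono t _ _ (hlmin_lb t j) (hlam_ub t j)
  -- the eigenvalue ratio r
  set r : ℕ → ℝ := fun t => lmin t / lam t with hr_def
  have hr_pos : ∀ t, 0 < r t := fun t => div_pos (hlmin_pos t) (hlam_pos t)
  have hr_le1 : ∀ t, r t ≤ 1 := fun t => (div_le_one (hlam_pos t)).2 (hlmin_le_lam t)
  have hr_rec : ∀ t, r t * (1 + gammaC * (1 - r t)) ≤ r (t + 1) := by
    intro t
    have hklam1 : gammaC ≤ (etaC t * c) * lam t := by
      have : etaC t * c * lam t = etaC t * (c * lam t) := by ring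
      linarith [(hrateC' t).1]
    have hklam2 : (etaC t * c) * lam t ≤ 1 / 2 := by
      have : etaC t * c * lam t = etaC t * (c * lam t) := by ring
      linarith [(hrateC' t).2]
    have hA1 := ratio_step (hlmin_pos t) (hlmin_le_lam t) hgC hklam1 hklam2
    have hA2 : (lmin t - (etaC t * c) * lmin t ^ 2) / (lam t - (etaC t * c) * lam t ^ 2)
        ≤ r (t + 1) :=
      div_le_div₀ (hlmin_pos (t+1)).le (hlmin_rec t) (hlam_pos (t+1)) (hlam_rec t)
    exact le_trans hA1 hA2
  have hr_mono : Monotone r := monotone_nat_of_le_succ fun t => by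
    have h1 : r t ≤ r t * (1 + gammaC * (1 - r t)) := by
      nlinarith [mul_nonneg (mul_nonneg hgC.le (sub_nonneg.2 (hr_le1 t))) (hr_pos t).le]
    exact le_trans h1 (hr_rec t)
  have hrlim : Tendsto r atTop (nhds 1) := by
    rcases tendsto_of_monotone hr_mono with h | ⟨L, hL⟩
    · exfalso
      obtain ⟨t, ht⟩ := (Filter.tendsto_atTop.1 h 2).exists
      linarith [hr_le1 t]
    · have hL1 : L ≤ 1 := le_of_tendsto' hL hr_le1
      have hr0L : r 0 ≤ L := hr_mono.ge_of_tendsto hL 0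
      have h2 : Tendsto (fun t => r (t + 1)) atTop (nhds L) :=
        hL.comp (tendsto_add_atTop_nat 1)
      have h3 : Tendsto (fun t => r t * (1 + gammaC * (1 - r t))) atTop
          (nhds (L * (1 + gammaC * (1 - L)))) :=
        hL.mul (tendsto_const_nhds.add ((tendsto_const_nhds.sub hL).const_mul gammaC))
      have h4 : L * (1 + gammaC * (1 - L)) ≤ L := le_of_tendsto_of_tendsto' h3 h2 hr_rec
      have hLeq : L = 1 := by
        have h5 : 1 ≤ L := by
          by_contra h5
          push_neg at h5
          nlinarith [mul_pos (mul_pos (lt_of_lt_of_le (hr_pos 0) hr0L) hgC)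
            (by linarith : (0:ℝ) < 1 - L)]
        linarith
      rwa [hLeq] at hL
  -- the error matrix E
  set E : ℕ → Matrix (Fin d) (Fin d) ℝ := fun t => (lam t)⁻¹ • (B * C t * B) - 1 with hE_def
  have hEconj : ∀ t, E t = uconj (hH t).eigenvectorUnitary
      (Matrix.diagonal (fun i => (lam t)⁻¹ * ev t i - 1)) := by
    intro t
    show (lam t)⁻¹ • (B * C t * B) - 1 = _
    conv_lhs => rw [hspec t]
    rw [uconj_smul, ← uconj_one ((hH t).eigenvectorUnitary), uconj_sub]
    exact congrArg _ (diag_shift _ _)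
  have hEfrob : ∀ t, frobNorm (E t) ≤ Real.sqrt d * (1 - r t) := by
    intro t
    have hEE : (E t)ᵀ * E t = uconj (hH t).eigenvectorUnitary
        (Matrix.diagonal (fun i => ((lam t)⁻¹ * ev t i - 1) * ((lam t)⁻¹ * ev t i - 1))) := by
      rw [hEconj t, transpose_uconj_diag, uconj_mul, Matrix.diagonal_mul_diagonal]
    have htr : frobNorm (E t)
        = Real.sqrt (∑ i, ((lam t)⁻¹ * ev t i - 1) * ((lam t)⁻¹ * ev t i - 1)) := by
      unfold frobNorm
      rw [hEE, trace_uconj, Matrix.trace_diagonal]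
    have hxi : ∀ i, ((lam t)⁻¹ * ev t i - 1) * ((lam t)⁻¹ * ev t i - 1) ≤ (1 - r t) ^ 2 := by
      intro i
      have hinv : 0 ≤ (lam t)⁻¹ := inv_nonneg.2 (hlam_pos t).le
      have hup : (lam t)⁻¹ * ev t i ≤ 1 := by
        have := mul_le_mul_of_nonneg_left (hlam_ub t i) hinv
        rwa [inv_mul_cancel₀ (hlam_pos t).ne'] at this
      have hlo : r t ≤ (lam t)⁻¹ * ev t i := by
        have h := mul_le_mul_of_nonneg_left (hlmin_lb t i) hinv
        calc r t = (lam t)⁻¹ * lmin t := div_eq_inv_mul _ _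
          _ ≤ (lam t)⁻¹ * ev t i := h
      have h1 : ((lam t)⁻¹ * ev t i - 1) ^ 2 ≤ (1 - r t) ^ 2 := by
        apply sq_le_sq'
        · linarith
        · linarith [hr_le1 t]
      calc ((lam t)⁻¹ * ev t i - 1) * ((lam t)⁻¹ * ev t i - 1)
          = ((lam t)⁻¹ * ev t i - 1) ^ 2 := (sq _).symm
        _ ≤ (1 - r t) ^ 2 := h1
    have hsum : (∑ i, ((lam t)⁻¹ * ev t i - 1) * ((lam t)⁻¹ * ev t i - 1))
        ≤ (d : ℝ) * (1 - r t) ^ 2 := by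
      calc (∑ i, ((lam t)⁻¹ * ev t i - 1) * ((lam t)⁻¹ * ev t i - 1))
          ≤ ∑ _i : Fin d, (1 - r t) ^ 2 := Finset.sum_le_sum fun i _ => hxi i
        _ = (d : ℝ) * (1 - r t) ^ 2 := by
            rw [Finset.sum_const, Finset.card_univ, Fintype.card_fin, nsmul_eq_mul]
    rw [htr]
    calc Real.sqrt (∑ i, ((lam t)⁻¹ * ev t i - 1) * ((lam t)⁻¹ * ev t i - 1))
        ≤ Real.sqrt ((d : ℝ) * (1 - r t) ^ 2) := Real.sqrt_le_sqrt hsum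
      _ = Real.sqrt d * (1 - r t) := by
          rw [Real.sqrt_mul (Nat.cast_nonneg d), Real.sqrt_sq (by linarith [hr_le1 t])]
  -- decomposition of H
  have hHdecomp : ∀ t, B * C t * B = lam t • (1 + E t) := by
    intro t
    have h1 : (1 : Matrix (Fin d) (Fin d) ℝ) + E t = (lam t)⁻¹ • (B * C t * B) := by
      show (1 : Matrix (Fin d) (Fin d) ℝ) + ((lam t)⁻¹ • (B * C t * B) - 1) = _
      abel
    rw [h1, smul_inv_smul₀ (hlam_pos t).ne']
  set K : ℝ := frobNorm B * frobNorm B⁻¹ * Real.sqrt d with hK_def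
  have hK : 0 ≤ K :=
    mul_nonneg (mul_nonneg (frobNorm_nonneg _) (frobNorm_nonneg _)) (Real.sqrt_nonneg _)
  have hErle : ∀ t, 0 ≤ 1 - r t := fun t => by linarith [hr_le1 t]
  -- step bound for m
  have hm_step : ∀ t, eucNorm (m (t + 1))
      ≤ ((1 - gammam) + K * (1 - r t)) * eucNorm (m t) := by
    intro t
    have hCA : C t * A = lam t • (1 + B⁻¹ * E t * B) := by
      have h1 : C t * A = B⁻¹ * (B * C t * B) * B := by
        have h2 : B⁻¹ * (B * C t * B) * B = B⁻¹ * B * (C t * (B * B)) := by noncomm_ring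
        rw [h2, hBiB, hBB, one_mul]
      rw [h1, hHdecomp t, mul_smul_comm, smul_mul_assoc]
      congr 1
      rw [Matrix.mul_add, Matrix.add_mul, Matrix.mul_one, hBiB]
    have hm2 : m (t + 1) = (1 - etam t * (c * lam t)) • m t
        - (etam t * (c * lam t)) • ((B⁻¹ * E t * B) *ᵥ m t) := by
      rw [hrecm t, hCA, Matrix.smul_mulVec, Matrix.add_mulVec, Matrix.one_mulVec]
      module
    set s : ℝ := etam t * (c * lam t) with hs_def
    have hs1 : gammam ≤ s := (hratem' t).1
    have hs2 : s ≤ 1 := (hratem' t).2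
    have hs0 : 0 ≤ s := le_trans hgm.le hs1
    rw [hm2]
    have h1 := eucNorm_sub_le ((1 - s) • m t) (s • ((B⁻¹ * E t * B) *ᵥ m t))
    rw [eucNorm_smul, eucNorm_smul, abs_of_nonneg (by linarith : (0:ℝ) ≤ 1 - s),
      abs_of_nonneg hs0] at h1
    have h2 : eucNorm ((B⁻¹ * E t * B) *ᵥ m t)
        ≤ frobNorm (B⁻¹ * E t * B) * eucNorm (m t) := eucNorm_mulVec_le _ _
    have h3 : frobNorm (B⁻¹ * E t * B) ≤ frobNorm B⁻¹ * (frobNorm (E t) * frobNorm B) := by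
      calc frobNorm (B⁻¹ * E t * B) ≤ frobNorm (B⁻¹ * E t) * frobNorm B := frobNorm_mul_le _ _
        _ ≤ (frobNorm B⁻¹ * frobNorm (E t)) * frobNorm B :=
            mul_le_mul_of_nonneg_right (frobNorm_mul_le _ _) (frobNorm_nonneg _)
        _ = frobNorm B⁻¹ * (frobNorm (E t) * frobNorm B) := by ring
    have h4 : frobNorm B⁻¹ * (frobNorm (E t) * frobNorm B) ≤ K * (1 - r t) := by
      rw [hK_def]
      have h5 : frobNorm (E t) * frobNorm B ≤ (Real.sqrt d * (1 - r t)) * frobNorm B :=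
        mul_le_mul_of_nonneg_right (hEfrob t) (frobNorm_nonneg _)
      calc frobNorm B⁻¹ * (frobNorm (E t) * frobNorm B)
          ≤ frobNorm B⁻¹ * ((Real.sqrt d * (1 - r t)) * frobNorm B) :=
            mul_le_mul_of_nonneg_left h5 (frobNorm_nonneg _)
        _ = frobNorm B * frobNorm B⁻¹ * Real.sqrt d * (1 - r t) := by ring
    have h6 : frobNorm (B⁻¹ * E t * B) ≤ K * (1 - r t) := le_trans h3 h4
    have h7 : s * eucNorm ((B⁻¹ * E t * B) *ᵥ m t) ≤ 1 * (K * (1 - r t) * eucNorm (m t)) :=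
      mul_le_mul hs2 (le_trans h2 (mul_le_mul_of_nonneg_right h6 (eucNorm_nonneg _)))
        (eucNorm_nonneg _) zero_le_one
    have h8 : (1 - s) * eucNorm (m t) ≤ (1 - gammam) * eucNorm (m t) :=
      mul_le_mul_of_nonneg_right (by linarith) (eucNorm_nonneg _)
    calc eucNorm ((1 - s) • m t - s • ((B⁻¹ * E t * B) *ᵥ m t))
        ≤ (1 - s) * eucNorm (m t) + s * eucNorm ((B⁻¹ * E t * B) *ᵥ m t) := h1
      _ ≤ (1 - gammam) * eucNorm (m t) + K * (1 - r t) * eucNorm (m t) := by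
          rw [one_mul] at h7
          linarith
      _ = ((1 - gammam) + K * (1 - r t)) * eucNorm (m t) := by ring
  -- step bound for C
  have hC_step : ∀ t, frobNorm (C (t + 1))
      ≤ ((1 - gammaC) + K * (1 - r t)) * frobNorm (C t) := by
    intro t
    have hCAC : C t * A * C t = lam t • (C t + C t * B * E t * B⁻¹) := by
      have h1 : C t * A * C t = C t * B * (B * C t * B) * B⁻¹ := by
        have h2 : C t * B * (B * C t * B) * B⁻¹ = C t * (B * B) * C t * (B * B⁻¹) := by
          noncomm_ring
        rw [h2, hBBi, hBB, mul_one]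
      rw [h1, hHdecomp t, mul_smul_comm, smul_mul_assoc]
      congr 1
      have h3 : C t * B * (1 + E t) * B⁻¹ = C t * (B * B⁻¹) + C t * B * E t * B⁻¹ := by
        noncomm_ring
      rw [h3, hBBi, mul_one]
    have hC2 : C (t + 1) = (1 - etaC t * (c * lam t)) • C t
        - (etaC t * (c * lam t)) • (C t * B * E t * B⁻¹) := by
      rw [hrecC t, hCAC]
      rw [smul_smul, smul_add, sub_smul, one_smul,
        show etaC t * c * (lam t) = etaC t * (c * lam t) by ring]
      abel
    set s : ℝ := etaC t * (c * lam t) with hs_def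
    have hs1 : gammaC ≤ s := (hrateC' t).1
    have hs2 : s ≤ 1 := by linarith [(hrateC' t).2]
    have hs0 : 0 ≤ s := le_trans hgC.le hs1
    rw [hC2]
    have h1 := frobNorm_sub_le ((1 - s) • C t) (s • (C t * B * E t * B⁻¹))
    rw [frobNorm_smul, frobNorm_smul, abs_of_nonneg (by linarith : (0:ℝ) ≤ 1 - s),
      abs_of_nonneg hs0] at h1
    have h3 : frobNorm (C t * B * E t * B⁻¹)
        ≤ frobNorm (C t) * frobNorm B * frobNorm (E t) * frobNorm B⁻¹ := by
      calc frobNorm (C t * B * E t * B⁻¹)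
          ≤ frobNorm (C t * B * E t) * frobNorm B⁻¹ := frobNorm_mul_le _ _
        _ ≤ (frobNorm (C t * B) * frobNorm (E t)) * frobNorm B⁻¹ :=
            mul_le_mul_of_nonneg_right (frobNorm_mul_le _ _) (frobNorm_nonneg _)
        _ ≤ ((frobNorm (C t) * frobNorm B) * frobNorm (E t)) * frobNorm B⁻¹ := by
            apply mul_le_mul_of_nonneg_right _ (frobNorm_nonneg _)
            exact mul_le_mul_of_nonneg_right (frobNorm_mul_le _ _) (frobNorm_nonneg _)
        _ = frobNorm (C t) * frobNorm B * frobNorm (E t) * frobNorm B⁻¹ := by ring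
    have h4 : frobNorm (C t) * frobNorm B * frobNorm (E t) * frobNorm B⁻¹
        ≤ K * (1 - r t) * frobNorm (C t) := by
      rw [hK_def]
      have h5 : frobNorm (C t) * frobNorm B * frobNorm (E t) * frobNorm B⁻¹
          ≤ frobNorm (C t) * frobNorm B * (Real.sqrt d * (1 - r t)) * frobNorm B⁻¹ := by
        apply mul_le_mul_of_nonneg_right _ (frobNorm_nonneg _)
        exact mul_le_mul_of_nonneg_left (hEfrob t)
          (mul_nonneg (frobNorm_nonneg _) (frobNorm_nonneg _))
      calc frobNorm (C t) * frobNorm B * frobNorm (E t) * frobNorm B⁻¹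
          ≤ frobNorm (C t) * frobNorm B * (Real.sqrt d * (1 - r t)) * frobNorm B⁻¹ := h5
        _ = frobNorm B * frobNorm B⁻¹ * Real.sqrt d * (1 - r t) * frobNorm (C t) := by ring
    have h7 : s * frobNorm (C t * B * E t * B⁻¹) ≤ K * (1 - r t) * frobNorm (C t) := by
      calc s * frobNorm (C t * B * E t * B⁻¹)
          ≤ 1 * (K * (1 - r t) * frobNorm (C t)) :=
            mul_le_mul hs2 (le_trans h3 h4) (frobNorm_nonneg _) zero_le_one
        _ = K * (1 - r t) * frobNorm (C t) := one_mul _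
    have h8 : (1 - s) * frobNorm (C t) ≤ (1 - gammaC) * frobNorm (C t) :=
      mul_le_mul_of_nonneg_right (by linarith) (frobNorm_nonneg _)
    calc frobNorm ((1 - s) • C t - s • (C t * B * E t * B⁻¹))
        ≤ (1 - s) * frobNorm (C t) + s * frobNorm (C t * B * E t * B⁻¹) := h1
      _ ≤ (1 - gammaC) * frobNorm (C t) + K * (1 - r t) * frobNorm (C t) := by linarith
      _ = ((1 - gammaC) + K * (1 - r t)) * frobNorm (C t) := by ring
  -- conclude
  have hgm1 : gammam ≤ 1 := le_trans (hratem' 0).1 (hratem' 0).2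
  have hgC1 : gammaC ≤ 1 := le_trans (hrateC' 0).1 (by linarith [(hrateC' 0).2])
  obtain ⟨hm_limsup, hm_tend⟩ := key_convergence (fun t => eucNorm (m t)) r
    (fun t => eucNorm_nonneg _) gammam K hgm hgm1 hK hr_le1 hrlim hm_step
  obtain ⟨hC_limsup, hC_tend⟩ := key_convergence (fun t => frobNorm (C t)) r
    (fun t => frobNorm_nonneg _) gammaC K hgC hgC1 hK hr_le1 hrlim hC_step
  exact ⟨hm_limsup, hC_limsup, hm_tend, hC_tend⟩
end

section
/- Let (X_i) be i.i.d. random variables and (h_n) a sequence of (random) measurable functions such that h_n(x) → 0 almost surely for almost every x, and such that for some m, E[sup_{j≥m}|h_j(X)|] < ∞ and E[sup_{j≥m}|h_j(X)|] → 0 as m → ∞. Then (1/n)Σ_{i=1}^n h_n(X_i) → 0 almost surely. -/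
set_option maxHeartbeats 1000000

open MeasureTheory Filter ProbabilityTheory

open scoped ENNReal Topology

section TriAux

lemma triAux_bdd_of_ne_top {f : ℕ → ℝ} (hf : (⨆ n, (‖f n‖₊ : ℝ≥0∞)) ≠ ∞) :
    BddAbove (Set.range fun n => |f n|) := by
  refine ⟨(⨆ n, (‖f n‖₊ : ℝ≥0∞)).toReal, ?_⟩
  rintro x ⟨n, rfl⟩
  have h1 : (‖f n‖₊ : ℝ≥0∞) ≤ ⨆ n, (‖f n‖₊ : ℝ≥0∞) := le_iSup (fun n => (‖f n‖₊ : ℝ≥0∞)) n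
  have h2 := ENNReal.toReal_mono hf h1
  rwa [show ((‖f n‖₊ : ℝ≥0∞)) = ENNReal.ofReal |f n| from Real.enorm_eq_ofReal_abs _, ENNReal.toReal_ofReal (abs_nonneg (f n))] at h2

lemma triAux_ne_top_of_bdd {f : ℕ → ℝ} (hb : BddAbove (Set.range fun n => |f n|)) :
    (⨆ n, (‖f n‖₊ : ℝ≥0∞)) ≠ ∞ := by
  obtain ⟨c, hc⟩ := hb
  have h1 : (⨆ n, (‖f n‖₊ : ℝ≥0∞)) ≤ ENNReal.ofReal c := by
    refine iSup_le fun n => ?_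
    rw [show ((‖f n‖₊ : ℝ≥0∞)) = ENNReal.ofReal |f n| from Real.enorm_eq_ofReal_abs _]
    exact ENNReal.ofReal_le_ofReal (hc ⟨n, rfl⟩)
  exact ne_top_of_le_ne_top ENNReal.ofReal_ne_top h1

lemma triAux_tail_bdd {f : ℕ → ℝ} (hb : BddAbove (Set.range fun n => |f n|)) (m : ℕ) :
    BddAbove (Set.range fun j : {j : ℕ // m ≤ j} => |f j.1|) := by
  obtain ⟨c, hc⟩ := hb
  exact ⟨c, by rintro x ⟨j, rfl⟩; exact hc ⟨j.1, rfl⟩⟩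

lemma triAux_tail_toReal_eq {f : ℕ → ℝ} (hb : BddAbove (Set.range fun n => |f n|)) (m : ℕ) :
    (⨆ j : {j : ℕ // m ≤ j}, (‖f j.1‖₊ : ℝ≥0∞)).toReal
      = ⨆ j : {j : ℕ // m ≤ j}, |f j.1| := by
  have hbm := triAux_tail_bdd hb m
  have hne : Nonempty {j : ℕ // m ≤ j} := ⟨⟨m, le_refl m⟩⟩
  have hs0 : (0:ℝ) ≤ ⨆ j : {j : ℕ // m ≤ j}, |f j.1| :=
    le_trans (abs_nonneg (f m)) (le_ciSup hbm ⟨m, le_refl m⟩)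
  have hle : (⨆ j : {j : ℕ // m ≤ j}, (‖f j.1‖₊ : ℝ≥0∞))
      ≤ ENNReal.ofReal (⨆ j : {j : ℕ // m ≤ j}, |f j.1|) := by
    refine iSup_le fun j => ?_
    rw [show ((‖f j.1‖₊ : ℝ≥0∞)) = ENNReal.ofReal |f j.1| from Real.enorm_eq_ofReal_abs _]
    exact ENNReal.ofReal_le_ofReal (le_ciSup hbm j)
  have hnetop : (⨆ j : {j : ℕ // m ≤ j}, (‖f j.1‖₊ : ℝ≥0∞)) ≠ ∞ :=
    ne_top_of_le_ne_top ENNReal.ofReal_ne_top hle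
  apply le_antisymm
  · exact ENNReal.toReal_le_of_le_ofReal hs0 hle
  · refine ciSup_le fun j => ?_
    have h1 : (‖f j.1‖₊ : ℝ≥0∞) ≤ ⨆ j : {j : ℕ // m ≤ j}, (‖f j.1‖₊ : ℝ≥0∞) :=
      le_iSup (fun j : {j : ℕ // m ≤ j} => (‖f j.1‖₊ : ℝ≥0∞)) j
    have h2 := ENNReal.toReal_mono hnetop h1
    rwa [show ((‖f j.1‖₊ : ℝ≥0∞)) = ENNReal.ofReal |f j.1| from Real.enorm_eq_ofReal_abs _, ENNReal.toReal_ofReal (abs_nonneg _)] at h2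

lemma triAux_tail_anti {f : ℕ → ℝ} (hb : BddAbove (Set.range fun n => |f n|))
    {m₀ m : ℕ} (hm : m₀ ≤ m) :
    (⨆ j : {j : ℕ // m ≤ j}, |f j.1|) ≤ ⨆ j : {j : ℕ // m₀ ≤ j}, |f j.1| := by
  have hne : Nonempty {j : ℕ // m ≤ j} := ⟨⟨m, le_refl m⟩⟩
  exact ciSup_le fun j => le_ciSup (triAux_tail_bdd hb m₀) ⟨j.1, le_trans hm j.2⟩

lemma triAux_abs_le_tail {f : ℕ → ℝ} (hb : BddAbove (Set.range fun n => |f n|))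
    {m n : ℕ} (hmn : m ≤ n) :
    |f n| ≤ ⨆ j : {j : ℕ // m ≤ j}, |f j.1| :=
  le_ciSup (triAux_tail_bdd hb m) ⟨n, hmn⟩

end TriAux

/-- Triangular-array strong law: if h_n → 0 a.e. and the tail suprema are uniformly
    integrable with vanishing expectation, then (1/n)∑_{i<n} h_n(X_i) → 0 a.s. for
    i.i.d. (X_i). -/
theorem triangular_array_avg_tendsto_zero
    {Ω : Type*} [MeasureSpace Ω] [IsProbabilityMeasure (volume : Measure Ω)]
    {E : Type*} [MeasurableSpace E]
    (X : ℕ → Ω → E) (hXm : ∀ i, Measurable (X i))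
    (hindep : iIndepFun X volume)
    (hident : ∀ i, IdentDistrib (X i) (X 0) volume volume)
    (h : ℕ → E → ℝ) (hmeas : ∀ n, Measurable (h n))
    (hto0 : ∀ᵐ x ∂(volume.map (X 0)), Tendsto (fun n => h n x) atTop (nhds 0))
    (hint : ∃ m₀, Integrable (fun x => ⨆ j : {j : ℕ // m₀ ≤ j}, |h j.1 x|)
        (volume.map (X 0)))
    (htail : Tendsto
        (fun m => ∫ x, (⨆ j : {j : ℕ // m ≤ j}, |h j.1 x|) ∂(volume.map (X 0)))
        atTop (nhds 0)) :
    ∀ᵐ ω, Tendsto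
      (fun n : ℕ => (n : ℝ)⁻¹ * ∑ i ∈ Finset.range n, h n (X i ω)) atTop (nhds 0) := by
  obtain ⟨m₀, hint⟩ := hint
  set μ := volume.map (X 0) with hμdef
  -- the good set, where the whole sequence is bounded
  set S : Set E := {x | (⨆ n, (‖h n x‖₊ : ℝ≥0∞)) ≠ ∞} with hSdef
  have hSmeas : MeasurableSet S := by
    have hsup : Measurable fun x => ⨆ n, (‖h n x‖₊ : ℝ≥0∞) :=
      Measurable.iSup fun n => (hmeas n).nnnorm.coe_nnreal_ennreal
    exact (hsup (measurableSet_singleton ∞)).compl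
  have hSbdd : ∀ x ∈ S, BddAbove (Set.range fun n => |h n x|) := fun x hx =>
    triAux_bdd_of_ne_top hx
  have hSae : ∀ᵐ x ∂μ, x ∈ S := by
    filter_upwards [hto0] with x hx
    exact triAux_ne_top_of_bdd hx.abs.bddAbove_range
  -- measurable versions of the tail suprema
  set g : ℕ → E → ℝ := fun m x => (⨆ j : {j : ℕ // m ≤ j}, (‖h j.1 x‖₊ : ℝ≥0∞)).toReal
    with hgdef
  have hgmeas : ∀ m, Measurable (g m) := by
    intro m
    have h1 : Measurable fun x => ⨆ j : {j : ℕ // m ≤ j}, (‖h j.1 x‖₊ : ℝ≥0∞) :=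
      Measurable.iSup fun j => (hmeas j.1).nnnorm.coe_nnreal_ennreal
    exact ENNReal.measurable_toReal.comp h1
  have hgeq : ∀ x ∈ S, ∀ m, g m x = ⨆ j : {j : ℕ // m ≤ j}, |h j.1 x| := fun x hx m =>
    triAux_tail_toReal_eq (hSbdd x hx) m
  have hgnonneg : ∀ m x, 0 ≤ g m x := fun m x => ENNReal.toReal_nonneg
  -- integrability of g m for m ≥ m₀
  have hgint : ∀ m, m₀ ≤ m → Integrable (g m) μ := by
    intro m hm
    refine hint.mono (hgmeas m).aestronglyMeasurable ?_
    filter_upwards [hSae] with x hx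
    rw [Real.norm_eq_abs, Real.norm_eq_abs, abs_of_nonneg (hgnonneg m x), hgeq x hx m]
    exact le_trans (triAux_tail_anti (hSbdd x hx) hm) (le_abs_self _)
  have hgintegral : ∀ m, ∫ x, g m x ∂μ = ∫ x, (⨆ j : {j : ℕ // m ≤ j}, |h j.1 x|) ∂μ := by
    intro m
    refine integral_congr_ae ?_
    filter_upwards [hSae] with x hx
    exact hgeq x hx m
  -- strong law for each m ≥ m₀
  have hslln : ∀ m, m₀ ≤ m → ∀ᵐ ω, Tendsto
      (fun n : ℕ => (∑ i ∈ Finset.range n, g m (X i ω)) / n) atTop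
      (𝓝 (∫ x, g m x ∂μ)) := by
    intro m hm
    have hcomp_int : Integrable (fun ω => g m (X 0 ω)) volume :=
      (integrable_map_measure (hgmeas m).aestronglyMeasurable (hXm 0).aemeasurable).mp
        (hgint m hm)
    have hindep' : Pairwise (Function.onFun (IndepFun · · (volume : Measure Ω))
        (fun i ω => g m (X i ω))) := fun i j hij =>
      (hindep.indepFun hij).comp (hgmeas m) (hgmeas m)
    have hident' : ∀ i, IdentDistrib (fun ω => g m (X i ω)) (fun ω => g m (X 0 ω))
        volume volume := fun i => (hident i).comp (hgmeas m)
    have hs := strong_law_ae_real (fun i ω => g m (X i ω)) hcomp_int hindep' hident'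
    have hE : (∫ ω, g m (X 0 ω)) = ∫ x, g m x ∂μ :=
      (integral_map (hXm 0).aemeasurable (hgmeas m).aestronglyMeasurable).symm
    simpa [hE] using hs
  -- X i ω is in the good set a.s.
  have hXS : ∀ᵐ ω, ∀ i, X i ω ∈ S := by
    rw [ae_all_iff]
    intro i
    have h1 : ∀ᵐ x ∂(volume.map (X i)), x ∈ S := by
      rw [(hident i).map_eq]; exact hSae
    exact (ae_map_iff (hXm i).aemeasurable hSmeas).mp h1
  have hall : ∀ᵐ ω, (∀ k : ℕ, Tendsto
      (fun n : ℕ => (∑ i ∈ Finset.range n, g (m₀ + k) (X i ω)) / n) atTop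
      (𝓝 (∫ x, g (m₀ + k) x ∂μ))) ∧ ∀ i, X i ω ∈ S :=
    (ae_all_iff.mpr fun k => hslln (m₀ + k) (Nat.le_add_right _ _)).and hXS
  filter_upwards [hall] with ω hω
  obtain ⟨hA, hXmem⟩ := hω
  rw [NormedAddCommGroup.tendsto_nhds_zero]
  intro ε hε
  -- choose a tail index with small expectation
  obtain ⟨m, hm⟩ := ((htail.eventually_lt_const hε).and (eventually_ge_atTop m₀)).exists
  obtain ⟨hmε, hmm₀⟩ := hm
  obtain ⟨k, rfl⟩ := Nat.exists_eq_add_of_le hmm₀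
  have hI : ∫ x, g (m₀ + k) x ∂μ < ε := by
    rw [hgintegral (m₀ + k)]; exact hmε
  have hev : ∀ᶠ n in atTop,
      (∑ i ∈ Finset.range n, g (m₀ + k) (X i ω)) / n < ε :=
    (hA k).eventually_lt_const hI
  filter_upwards [hev, eventually_ge_atTop (m₀ + k)] with n hnA hnm
  have hninv : (0:ℝ) ≤ (n : ℝ)⁻¹ := inv_nonneg.2 (Nat.cast_nonneg n)
  calc ‖(n : ℝ)⁻¹ * ∑ i ∈ Finset.range n, h n (X i ω)‖
      ≤ (n : ℝ)⁻¹ * ∑ i ∈ Finset.range n, |h n (X i ω)| := by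
        rw [norm_mul, Real.norm_eq_abs, Real.norm_eq_abs, abs_of_nonneg hninv]
        exact mul_le_mul_of_nonneg_left (Finset.abs_sum_le_sum_abs _ _) hninv
    _ ≤ (n : ℝ)⁻¹ * ∑ i ∈ Finset.range n, g (m₀ + k) (X i ω) := by
        refine mul_le_mul_of_nonneg_left (Finset.sum_le_sum fun i _ => ?_) hninv
        rw [hgeq _ (hXmem i) (m₀ + k)]
        exact triAux_abs_le_tail (hSbdd _ (hXmem i)) hnm
    _ = (∑ i ∈ Finset.range n, g (m₀ + k) (X i ω)) / n := by
        rw [div_eq_mul_inv, mul_comm]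
    _ < ε := hnA
end

section
/- Let M be a d×d real matrix whose eigenvalues are real and positive (e.g., M = cAC with A, C positive definite symmetric and c > 0) and suppose M/λ₁(M) → I as t → ∞ along a sequence M^t, with scalars γ ≤ η^t λ₁(M^t) ≤ 1. Then limsup_t σ₁(I - η^t M^t) ≤ 1 - γ, where σ₁ denotes the largest singular value. -/
open Matrix Filter

/-- Largest singular value of a real square matrix. -/
noncomputable def sigmaOne {d : ℕ} (M : Matrix (Fin d) (Fin d) ℝ) : ℝ :=
  Real.sqrt (⨆ i, (Matrix.isHermitian_conjTranspose_mul_self M).eigenvalues i)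

set_option synthInstance.maxHeartbeats 1000000
set_option maxHeartbeats 1000000


noncomputable def opN {d : ℕ} (A : Matrix (Fin d) (Fin d) ℝ) : ℝ :=
  ‖Matrix.toEuclideanCLM (𝕜 := ℝ) (n := Fin d) A‖

lemma opN_nonneg {d : ℕ} (A : Matrix (Fin d) (Fin d) ℝ) : 0 ≤ opN A := norm_nonneg _

lemma opN_zero {d : ℕ} : opN (0 : Matrix (Fin d) (Fin d) ℝ) = 0 := by
  rw [opN, _root_.map_zero, norm_zero]

lemma opN_one {d : ℕ} (hd : 0 < d) : opN (1 : Matrix (Fin d) (Fin d) ℝ) = 1 := by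
  have : Nontrivial (EuclideanSpace ℝ (Fin d)) := by
    have : Nonempty (Fin d) := ⟨⟨0, hd⟩⟩
    infer_instance
  rw [opN, _root_.map_one, ContinuousLinearMap.one_def]
  exact ContinuousLinearMap.norm_id

lemma opN_add_le {d : ℕ} (A B : Matrix (Fin d) (Fin d) ℝ) : opN (A + B) ≤ opN A + opN B := by
  rw [opN, _root_.map_add]; exact norm_add_le _ _

lemma opN_smul {d : ℕ} (c : ℝ) (A : Matrix (Fin d) (Fin d) ℝ) : opN (c • A) = |c| * opN A := by
  rw [opN, _root_.map_smul]
  exact norm_smul c (Matrix.toEuclideanCLM (𝕜 := ℝ) A)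

lemma opN_conjTranspose {d : ℕ} (A : Matrix (Fin d) (Fin d) ℝ) : opN Aᴴ = opN A := by
  rw [show Aᴴ = star A from rfl, opN, map_star]
  have h : star (Matrix.toEuclideanCLM (𝕜 := ℝ) A) =
      ContinuousLinearMap.adjoint (Matrix.toEuclideanCLM (𝕜 := ℝ) A) := rfl
  rw [opN, h]
  exact ContinuousLinearMap.adjoint.norm_map _

lemma sigmaOne0_le_opN {d : ℕ} (hd : 0 < d) (A : Matrix (Fin d) (Fin d) ℝ) :
    Real.sqrt (⨆ i, (Matrix.isHermitian_conjTranspose_mul_self A).eigenvalues i) ≤ opN A := by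
  have hne : Nonempty (Fin d) := ⟨⟨0, hd⟩⟩
  have h0 : 0 ≤ opN A := opN_nonneg A
  rw [show opN A = Real.sqrt (opN A ^ 2) by rw [Real.sqrt_sq h0]]
  apply Real.sqrt_le_sqrt
  apply ciSup_le
  intro i
  set hH := Matrix.isHermitian_conjTranspose_mul_self A
  set μ := hH.eigenvalues i with hμ
  set v := hH.eigenvectorBasis i with hv
  have hnv : ‖v‖ = 1 := hH.eigenvectorBasis.orthonormal.1 i
  set T := Matrix.toEuclideanCLM (𝕜 := ℝ) (Aᴴ * A)
  have hTv : T v = μ • v := by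
    apply WithLp.ofLp_injective 2
    have h1 := Matrix.ofLp_toEuclideanCLM (𝕜 := ℝ) (Aᴴ * A) v
    rw [h1]
    have h2 := hH.mulVec_eigenvectorBasis i
    exact h2
  have habs : |μ| ≤ opN (Aᴴ * A) := by
    have := T.le_opNorm v
    rw [hTv, norm_smul, Real.norm_eq_abs, hnv, mul_one, mul_one] at this
    exact this
  have hAA : opN (Aᴴ * A) ≤ opN A ^ 2 := by
    rw [opN, _root_.map_mul]
    calc ‖Matrix.toEuclideanCLM (𝕜 := ℝ) Aᴴ * Matrix.toEuclideanCLM (𝕜 := ℝ) A‖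
        ≤ ‖Matrix.toEuclideanCLM (𝕜 := ℝ) Aᴴ‖ * ‖Matrix.toEuclideanCLM (𝕜 := ℝ) A‖ :=
          norm_mul_le _ _
      _ = opN A ^ 2 := by rw [show ‖Matrix.toEuclideanCLM (𝕜 := ℝ) Aᴴ‖ = opN Aᴴ from rfl,
            opN_conjTranspose, show ‖Matrix.toEuclideanCLM (𝕜 := ℝ) A‖ = opN A from rfl]; ring
  calc μ ≤ |μ| := le_abs_self μ
    _ ≤ opN (Aᴴ * A) := habs
    _ ≤ opN A ^ 2 := hAA

lemma sigmaOne_le_opN {d : ℕ} (hd : 0 < d) (A : Matrix (Fin d) (Fin d) ℝ) :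
    sigmaOne A ≤ opN A := sigmaOne0_le_opN hd A

lemma opN_continuous {d : ℕ} :
    Continuous fun A : Matrix (Fin d) (Fin d) ℝ => opN A := by
  have hL : Continuous fun A : Matrix (Fin d) (Fin d) ℝ =>
      Matrix.toEuclideanCLM (𝕜 := ℝ) (n := Fin d) A := by
    let L : Matrix (Fin d) (Fin d) ℝ →ₗ[ℝ]
        (EuclideanSpace ℝ (Fin d) →L[ℝ] EuclideanSpace ℝ (Fin d)) :=
      { toFun := fun A => Matrix.toEuclideanCLM (𝕜 := ℝ) A
        map_add' := fun A B => by rw [_root_.map_add]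
        map_smul' := fun c A => by rw [_root_.map_smul]; rfl }
    exact L.continuous_of_finiteDimensional
  exact continuous_norm.comp hL


/-- If M^t/λ₁(M^t) → I and γ ≤ η^t λ₁(M^t) ≤ 1 then limsup σ₁(I − η^t M^t) ≤ 1 − γ. -/
theorem limsup_sigmaOne_le {d : ℕ} (hd : 0 < d)
    (M : ℕ → Matrix (Fin d) (Fin d) ℝ) (lam1 : ℕ → ℝ) (eta : ℕ → ℝ) (gamma : ℝ)
    (hgamma : 0 < gamma) (hlam : ∀ t, 0 < lam1 t)
    (hconv : Tendsto (fun t => (lam1 t)⁻¹ • M t) atTop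
      (nhds (1 : Matrix (Fin d) (Fin d) ℝ)))
    (hrate : ∀ t, gamma ≤ eta t * lam1 t ∧ eta t * lam1 t ≤ 1) :
    limsup (fun t => sigmaOne (1 - eta t • M t)) atTop ≤ 1 - gamma := by
  set E : ℕ → Matrix (Fin d) (Fin d) ℝ := fun t => 1 - (lam1 t)⁻¹ • M t with hE
  have hE0 : Tendsto E atTop (nhds (0 : Matrix (Fin d) (Fin d) ℝ)) := by
    have h := tendsto_const_nhds.sub hconv
      (f := fun _ : ℕ => (1 : Matrix (Fin d) (Fin d) ℝ))
    simpa using h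
  have hopN0 : Tendsto (fun t => opN (E t)) atTop (nhds 0) := by
    have := (opN_continuous.tendsto 0).comp hE0
    simpa [opN_zero, Function.comp_def] using this
  have hb : ∀ t, sigmaOne (1 - eta t • M t) ≤ (1 - gamma) + opN (E t) := by
    intro t
    obtain ⟨h1, h2⟩ := hrate t
    have hl := hlam t
    have hpos : 0 < eta t * lam1 t := lt_of_lt_of_le hgamma h1
    have hdecomp : (1 : Matrix (Fin d) (Fin d) ℝ) - eta t • M t
        = (1 - eta t * lam1 t) • (1 : Matrix (Fin d) (Fin d) ℝ)
          + (eta t * lam1 t) • E t := by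
      rw [hE]
      rw [smul_sub, smul_smul, sub_smul, one_smul]
      rw [show eta t * lam1 t * (lam1 t)⁻¹ = eta t by field_simp]
      abel
    calc sigmaOne (1 - eta t • M t) ≤ opN (1 - eta t • M t) := sigmaOne_le_opN hd _
      _ = opN ((1 - eta t * lam1 t) • (1 : Matrix (Fin d) (Fin d) ℝ)
            + (eta t * lam1 t) • E t) := by rw [hdecomp]
      _ ≤ opN ((1 - eta t * lam1 t) • (1 : Matrix (Fin d) (Fin d) ℝ))
            + opN ((eta t * lam1 t) • E t) := opN_add_le _ _
      _ = |1 - eta t * lam1 t| * opN (1 : Matrix (Fin d) (Fin d) ℝ)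
            + |eta t * lam1 t| * opN (E t) := by rw [opN_smul, opN_smul]
      _ = (1 - eta t * lam1 t) + (eta t * lam1 t) * opN (E t) := by
            rw [opN_one hd, abs_of_nonneg (by linarith), abs_of_pos hpos, mul_one]
      _ ≤ (1 - gamma) + opN (E t) := by
            have := opN_nonneg (E t)
            nlinarith
  have hg : Tendsto (fun t => (1 - gamma) + opN (E t)) atTop (nhds (1 - gamma)) := by
    simpa using tendsto_const_nhds.add hopN0
  have hle := Filter.limsup_le_limsup (Filter.Eventually.of_forall hb)
    (Filter.isCoboundedUnder_le_of_le atTop (x := 0)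
      (fun t => Real.sqrt_nonneg _))
    (hg.isBoundedUnder_le)
  rwa [hg.limsup_eq] at hle
end
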